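/- Let A_k, C_k be 2×2 Hermitian matrices with C_k = diag(c₁, c₂), c₁ > 0 > c₂, and suppose the (1,2) entry a₁₂ of A_k is nonzero. Then for each α ∈ {a̅₁₂/|a₁₂|·(±1)} (i.e. α = ±|a₁₂|/a₁₂), the vector z(α) = [√(−c₂/(c₁−c₂)); α√(c₁/(c₁−c₂))] is a unit vector satisfying z(α)ᴴC_k z(α) = 0, and (ν(α), θ(α), z(α)) with θ(α) = z(α)ᴴA_k z(α) and ν(α) = z(α)ᴴC_kA_kz(α)/‖C_kz(α)‖² is a 2D-eigentriplet of (A_k, C_k): (A_k − ν(α)C_k)z(α) = θ(α) z(α). -/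

import Mathlib

open scoped Matrix

/-- Spectral (ℓ²-operator) norm of a square complex matrix. -/
noncomputable def specNorm {n : Type*} [Fintype n] [DecidableEq n]
    (M : Matrix n n ℂ) : ℝ :=
  ‖Matrix.toEuclideanCLM (𝕜 := ℂ) M‖

/-- Euclidean norm of a complex vector. -/
noncomputable def vecNorm {n : Type*} [Fintype n] (x : n → ℂ) : ℝ :=
  ‖(EuclideanSpace.equiv n ℂ).symm x‖

/-- A Hermitian matrix is indefinite: its quadratic form takes both
positive and negative values. -/
def IsIndefinite {n : Type*} [Fintype n] (M : Matrix n n ℂ) : Prop :=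
  (∃ y : n → ℂ, 0 < (star y ⬝ᵥ M.mulVec y).re) ∧
  (∃ z : n → ℂ, (star z ⬝ᵥ M.mulVec z).re < 0)

/-- `(μ, lam, x)` is a 2D-eigentriplet of the pair `(A, C)`:
`(A - μ C) x = lam x`, `xᴴ C x = 0`, `xᴴ x = 1`. -/
def Is2DEigentriplet {n : Type*} [Fintype n] (A C : Matrix n n ℂ)
    (μ lam : ℝ) (x : n → ℂ) : Prop :=
  (A - (μ : ℂ) • C).mulVec x = (lam : ℂ) • x ∧
  star x ⬝ᵥ C.mulVec x = 0 ∧ star x ⬝ᵥ x = 1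

/-- for a 2×2 Hermitian `A` with `a₁₂ ≠ 0` and
`C = diag(c₁, c₂)` with `c₁ > 0 > c₂`, each choice `α = ±|a₁₂|/a₁₂`
yields a 2D-eigentriplet `(ν(α), θ(α), z(α))` of `(A, C)`. -/
theorem stmt11 (A : Matrix (Fin 2) (Fin 2) ℂ) (hA : A.IsHermitian)
    (h12 : A 0 1 ≠ 0)
    (c₁ c₂ : ℝ) (hc₁ : 0 < c₁) (hc₂ : c₂ < 0)
    (C : Matrix (Fin 2) (Fin 2) ℂ)
    (hC : C = !![(c₁ : ℂ), 0; 0, (c₂ : ℂ)])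
    (α : ℂ)
    (hα : α = (‖A 0 1‖ : ℂ) / A 0 1 ∨
          α = -((‖A 0 1‖ : ℂ) / A 0 1))
    (z : Fin 2 → ℂ)
    (hz : z = ![(Real.sqrt (-c₂ / (c₁ - c₂)) : ℂ),
                α * (Real.sqrt (c₁ / (c₁ - c₂)) : ℂ)])
    (θ ν : ℝ)
    (hθ : θ = (star z ⬝ᵥ A.mulVec z).re)
    (hν : ν = (star z ⬝ᵥ (C * A).mulVec z).re /
        (star (C.mulVec z) ⬝ᵥ C.mulVec z).re) :
    Is2DEigentriplet A C ν θ z := by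
  have hdpos : (0:ℝ) < c₁ - c₂ := by linarith
  -- Hermitian entries
  have hp : (((A 0 0).re : ℝ) : ℂ) = A 0 0 := by simpa using hA.coe_re_apply_self 0
  have hq : (((A 1 1).re : ℝ) : ℂ) = A 1 1 := by simpa using hA.coe_re_apply_self 1
  have hA10 : A 1 0 = (starRingEnd ℂ) (A 0 1) := by
    conv_lhs => rw [← hA.eq]
    rfl
  set p : ℝ := (A 0 0).re with hpdef
  set q : ℝ := (A 1 1).re with hqdef
  set r : ℝ := ‖A 0 1‖ with hrdef
  have hrpos : 0 < r := norm_pos_iff.mpr h12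
  have haa : A 0 1 * (starRingEnd ℂ) (A 0 1) = ((r^2 : ℝ) : ℂ) := by
    rw [Complex.mul_conj]
    exact_mod_cast congrArg Complex.ofReal (Complex.sq_norm (A 0 1)).symm
  -- the sign ε
  obtain ⟨ε, hε2, hαa⟩ : ∃ ε : ℝ, ε^2 = 1 ∧ α * A 0 1 = ((ε * r : ℝ) : ℂ) := by
    rcases hα with h | h
    · exact ⟨1, by norm_num, by rw [h]; field_simp⟩
    · refine ⟨-1, by norm_num, ?_⟩
      rw [h]; field_simp; push_cast; ring
  have hαconj : (starRingEnd ℂ) α * (starRingEnd ℂ) (A 0 1) = ((ε * r : ℝ) : ℂ) := by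
    have := congrArg (starRingEnd ℂ) hαa
    simpa using this
  have hαα : (starRingEnd ℂ) α * α = 1 := by
    have hne : ((r^2 : ℝ) : ℂ) ≠ 0 := by
      exact_mod_cast (by positivity : (r:ℝ)^2 ≠ 0)
    refine mul_right_cancel₀ hne ?_
    calc ((starRingEnd ℂ) α * α) * ((r^2 : ℝ) : ℂ)
        = (α * A 0 1) * ((starRingEnd ℂ) α * (starRingEnd ℂ) (A 0 1)) := by
          rw [← haa]; ring
      _ = ((ε*r : ℝ):ℂ) * ((ε*r:ℝ):ℂ) := by rw [hαa, hαconj]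
      _ = 1 * ((r^2 : ℝ) : ℂ) := by norm_cast; nlinarith [hε2]
  -- opaque square roots
  obtain ⟨s₁, hs₁pos, hzs₁, hs1sq⟩ :
      ∃ s : ℝ, 0 < s ∧ Real.sqrt (-c₂ / (c₁ - c₂)) = s ∧ s^2 = -c₂ / (c₁ - c₂) := by
    refine ⟨_, Real.sqrt_pos.2 (div_pos (by linarith) hdpos), rfl,
      Real.sq_sqrt (le_of_lt (div_pos (by linarith) hdpos))⟩
  obtain ⟨s₂, hs₂pos, hzs₂, hs2sq⟩ :
      ∃ s : ℝ, 0 < s ∧ Real.sqrt (c₁ / (c₁ - c₂)) = s ∧ s^2 = c₁ / (c₁ - c₂) := by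
    refine ⟨_, Real.sqrt_pos.2 (div_pos hc₁ hdpos), rfl,
      Real.sq_sqrt ((div_pos hc₁ hdpos).le)⟩
  rw [hzs₁, hzs₂] at hz
  obtain ⟨d, hddef⟩ : ∃ d : ℝ, c₁ - c₂ = d := ⟨_, rfl⟩
  have hd0 : d ≠ 0 := by rw [← hddef]; linarith
  have hc₁eq : c₁ = d * s₂^2 := by rw [hs2sq, ← hddef]; field_simp
  have hc₂eq : c₂ = -(d * s₁^2) := by rw [hs1sq, ← hddef]; field_simp
  have hsum : s₁^2 + s₂^2 = 1 := by
    rw [hs1sq, hs2sq]; field_simp; ring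
  have hs₁0 : (s₁:ℝ) ≠ 0 := ne_of_gt hs₁pos
  have hs₂0 : (s₂:ℝ) ≠ 0 := ne_of_gt hs₂pos
  -- complex values of the quadratic forms
  have hθval : star z ⬝ᵥ A.mulVec z =
      ((p * s₁^2 + q * s₂^2 + 2 * (ε*r) * (s₁ * s₂) : ℝ) : ℂ) := by
    subst hz
    simp only [Matrix.mulVec, dotProduct, Fin.sum_univ_two, Pi.star_apply,
      Matrix.cons_val_zero, Matrix.cons_val_one, Matrix.head_cons, hA10]
    rw [star_mul']
    linear_combination (norm := (simp only [Complex.star_def, map_add, map_mul, map_zero, Complex.conj_ofReal]; push_cast; ring))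
      (-((s₁:ℂ)^2)) * hp + (-((s₂:ℂ)^2)) * hq + ((s₁:ℂ)*(s₂:ℂ)) * hαa +
      ((s₁:ℂ)*(s₂:ℂ)) * hαconj + (A 1 1 * (s₂:ℂ)^2) * hαα
  have hnumval : star z ⬝ᵥ (C * A).mulVec z =
      ((c₁*p*s₁^2 + c₂*q*s₂^2 + (c₁+c₂)*(ε*r)*(s₁*s₂) : ℝ) : ℂ) := by
    subst hz hC
    simp only [Matrix.mulVec, dotProduct, Fin.sum_univ_two, Pi.star_apply,
      Matrix.cons_val_zero, Matrix.cons_val_one, Matrix.head_cons, hA10,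
      Matrix.mul_apply, Matrix.cons_val', Matrix.empty_val', Matrix.cons_val_fin_one,
      Matrix.head_fin_const, Matrix.of_apply, Matrix.cons_val_zero, Matrix.head_cons]
    rw [star_mul']
    linear_combination (norm := (simp only [Complex.star_def, map_add, map_mul, map_zero, Complex.conj_ofReal]; push_cast; ring))
      (-((c₁:ℂ)*(s₁:ℂ)^2)) * hp + (-((c₂:ℂ)*(s₂:ℂ)^2)) * hq + ((c₁:ℂ)*(s₁:ℂ)*(s₂:ℂ)) * hαa +
      ((c₂:ℂ)*(s₁:ℂ)*(s₂:ℂ)) * hαconj + ((c₂:ℂ) * A 1 1 * (s₂:ℂ)^2) * hαα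
  have hdenval : star (C.mulVec z) ⬝ᵥ C.mulVec z = ((c₁^2*s₁^2 + c₂^2*s₂^2 : ℝ) : ℂ) := by
    subst hz hC
    simp only [Matrix.mulVec, dotProduct, Fin.sum_univ_two, Pi.star_apply,
      Matrix.cons_val_zero, Matrix.cons_val_one, Matrix.head_cons,
      Matrix.cons_val', Matrix.empty_val', Matrix.cons_val_fin_one, Matrix.head_fin_const, Matrix.of_apply]
    linear_combination (norm := (simp only [Complex.star_def, map_add, map_mul, map_zero, Complex.conj_ofReal]; push_cast; ring))
      ((c₂:ℂ)^2*(s₂:ℂ)^2) * hαα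
  have hCzval : star z ⬝ᵥ C.mulVec z = ((c₁*s₁^2 + c₂*s₂^2 : ℝ) : ℂ) := by
    subst hz hC
    simp only [Matrix.mulVec, dotProduct, Fin.sum_univ_two, Pi.star_apply,
      Matrix.cons_val_zero, Matrix.cons_val_one, Matrix.head_cons,
      Matrix.cons_val', Matrix.empty_val', Matrix.cons_val_fin_one, Matrix.head_fin_const, Matrix.of_apply]
    linear_combination (norm := (simp only [Complex.star_def, map_add, map_mul, map_zero, Complex.conj_ofReal]; push_cast; ring))
      ((c₂:ℂ)*(s₂:ℂ)^2) * hαα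
  have honeval : star z ⬝ᵥ z = ((s₁^2 + s₂^2 : ℝ) : ℂ) := by
    subst hz
    simp only [dotProduct, Fin.sum_univ_two, Pi.star_apply,
      Matrix.cons_val_zero, Matrix.cons_val_one, Matrix.head_cons]
    linear_combination (norm := (simp only [Complex.star_def, map_add, map_mul, map_zero, Complex.conj_ofReal]; push_cast; ring))
      ((s₂:ℂ)^2) * hαα
  -- real values
  have hθR : θ = p*s₁^2 + q*s₂^2 + 2*(ε*r)*(s₁*s₂) := by
    rw [hθ, hθval, Complex.ofReal_re]
  have hνR : ν = (c₁*p*s₁^2 + c₂*q*s₂^2 + (c₁+c₂)*(ε*r)*(s₁*s₂)) / (c₁^2*s₁^2 + c₂^2*s₂^2) := by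
    rw [hν, hnumval, hdenval, Complex.ofReal_re, Complex.ofReal_re]
  have hD : c₁^2*s₁^2 + c₂^2*s₂^2 = d^2*s₁^2*s₂^2 := by
    rw [hc₁eq, hc₂eq]
    linear_combination (d^2*s₁^2*s₂^2)*hsum
  have hN : c₁*p*s₁^2 + c₂*q*s₂^2 + (c₁+c₂)*(ε*r)*(s₁*s₂) =
      d*s₁*s₂*((p-q)*(s₁*s₂) + (s₂^2-s₁^2)*(ε*r)) := by
    rw [hc₁eq, hc₂eq]; ring
  have hν'' : ν * (d*s₁*s₂) = (p-q)*(s₁*s₂) + (s₂^2-s₁^2)*(ε*r) := by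
    rw [hνR, hN, hD]
    field_simp
  have R1 : (p - ν*(d*s₂^2))*s₁ + (ε*r)*s₂ = θ*s₁ := by
    refine mul_right_cancel₀ hs₁0 ?_
    linear_combination (-(s₁^2))*hθR + (-(s₁*s₂))*hν'' + (-(p*s₁^2 + (ε*r)*s₁*s₂))*hsum
  have R2 : (ε*r)*s₁ + (q + ν*(d*s₁^2))*s₂ = θ*s₂ := by
    refine mul_right_cancel₀ hs₂0 ?_
    linear_combination (-(s₂^2))*hθR + (s₁*s₂)*hν'' + (-(q*s₂^2 + (ε*r)*s₁*s₂))*hsum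
  have hz0 : c₁*s₁^2 + c₂*s₂^2 = 0 := by
    linear_combination s₁^2*hc₁eq + s₂^2*hc₂eq
  refine ⟨?_, ?_, ?_⟩
  · -- the eigen-equation
    subst hz hC
    funext i
    fin_cases i
    · simp only [Matrix.mulVec, dotProduct, Fin.sum_univ_two, Matrix.sub_apply,
        Matrix.smul_apply, Matrix.cons_val_zero, Matrix.cons_val_one, Matrix.head_cons,
        Pi.smul_apply, smul_eq_mul, Matrix.cons_val', Matrix.empty_val',
        Matrix.cons_val_fin_one, Matrix.head_fin_const, Matrix.of_apply, Fin.isValue, Fin.zero_eta]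
      rw [hc₁eq]
      have R1C := congrArg (Complex.ofReal) R1
      linear_combination (norm := (push_cast; ring)) R1C + ((s₂:ℂ))*hαa + (-((s₁:ℂ)))*hp
    · simp only [Matrix.mulVec, dotProduct, Fin.sum_univ_two, Matrix.sub_apply,
        Matrix.smul_apply, Matrix.cons_val_zero, Matrix.cons_val_one, Matrix.head_cons,
        Pi.smul_apply, smul_eq_mul, Matrix.cons_val', Matrix.empty_val',
        Matrix.cons_val_fin_one, Matrix.head_fin_const, Matrix.of_apply, Fin.isValue, Fin.mk_one]
      rw [hA10, hc₂eq]
      have R2C := congrArg (Complex.ofReal) R2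
      linear_combination (norm := (push_cast; ring)) α*R2C + ((s₁:ℂ)*α)*hαconj +
        (-((starRingEnd ℂ) (A 0 1) * (s₁:ℂ)))*hαα + (-(α*(s₂:ℂ)))*hq
  · rw [hCzval, hz0]
    norm_num
  · rw [honeval, hsum]
    norm_num
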